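/- Assume 0 ≤ p_eps ≤ 1. For every integer m ≥ 1, all usefulness indices i, j ∈ {1,…,K}, and all ages Δ, Δ' ∈ {1,…,Δmax}, the (m + Δ' − 1)-step transition probability of the always-pull chain satisfies ((P_{π₁})^{m+Δ'−1})((Δ, i), (Δ', j)) ≥ (1 − p_eps)^m · (P_v^m)_{ij} · p_eps^{Δ'−1}. -/

import Mathlib

open Matrix Filter

/-- Truncated successor age (0-indexed: index `d` encodes age `d+1`,
so this encodes `min (Δ+1) Δmax`). -/
def ageSucc {dmax : ℕ} (d : Fin dmax) : Fin dmax :=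
  ⟨min (d.val + 1) (dmax - 1), lt_of_le_of_lt (min_le_right _ _) (Nat.sub_lt d.pos one_pos)⟩

/-- One-step transition probability from state `s = (age, usefulness)` to `s'`
under the real-valued action `a ∈ {0,1}`: to an age-one state `(1, j)` it is
`a·(1−p_eps)·p_{ij}`, to `(min(Δ+1,Δmax), i)` it is `a·p_eps + (1−a)`, and `0` elsewhere. -/
def step {dmax K : ℕ} (Pv : Matrix (Fin K) (Fin K) ℝ) (peps : ℝ) (a : ℝ)
    (s s' : Fin dmax × Fin K) : ℝ :=
  (if s'.1 = (⟨0, s.1.pos⟩ : Fin dmax) then a * (1 - peps) * Pv s.2 s'.2 else 0)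
  + (if s'.1 = ageSucc s.1 ∧ s'.2 = s.2 then a * peps + (1 - a) else 0)

/-- The transition matrix on `S = {1,…,Δmax} × {1,…,K}` induced by a stationary
deterministic policy `π : S → {0,1}` (`true` = pull, `false` = silent). -/
def polMat {dmax K : ℕ} (Pv : Matrix (Fin K) (Fin K) ℝ) (peps : ℝ)
    (π : Fin dmax × Fin K → Bool) :
    Matrix (Fin dmax × Fin K) (Fin dmax × Fin K) ℝ :=
  Matrix.of fun s s' => step Pv peps (if π s then 1 else 0) s s'


section Aux

variable {dmax K : ℕ} (Pv : Matrix (Fin K) (Fin K) ℝ) (peps : ℝ)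

lemma polMat_nn (hPv : ∀ i j, 0 ≤ Pv i j) (hp0 : 0 ≤ peps) (hp1 : peps ≤ 1)
    (s s' : Fin dmax × Fin K) : 0 ≤ polMat Pv peps (fun _ => true) s s' := by
  simp only [polMat, step, Matrix.of_apply, if_true]
  apply add_nonneg <;> split_ifs <;> first | nlinarith [hPv s.2 s'.2] | norm_num

lemma polMat_pow_nn (hPv : ∀ i j, 0 ≤ Pv i j) (hp0 : 0 ≤ peps) (hp1 : peps ≤ 1)
    (n : ℕ) : ∀ s s' : Fin dmax × Fin K, 0 ≤ ((polMat Pv peps (fun _ => true)) ^ n) s s' := by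
  induction n with
  | zero => intro s s'; simp [Matrix.one_apply]; split_ifs <;> norm_num
  | succ n ih =>
    intro s s'
    rw [pow_succ, Matrix.mul_apply]
    exact Finset.sum_nonneg fun u _ => mul_nonneg (ih s u) (polMat_nn Pv peps hPv hp0 hp1 u s')

lemma chapman (hPv : ∀ i j, 0 ≤ Pv i j) (hp0 : 0 ≤ peps) (hp1 : peps ≤ 1)
    (a b : ℕ) (s u t : Fin dmax × Fin K) :
    ((polMat Pv peps (fun _ => true)) ^ a) s u * ((polMat Pv peps (fun _ => true)) ^ b) u t
      ≤ ((polMat Pv peps (fun _ => true)) ^ (a + b)) s t := by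
  rw [pow_add, Matrix.mul_apply]
  exact Finset.single_le_sum (f := fun v => _ * _)
    (fun v _ => mul_nonneg (polMat_pow_nn Pv peps hPv hp0 hp1 a s v)
      (polMat_pow_nn Pv peps hPv hp0 hp1 b v t)) (Finset.mem_univ u)

lemma polMat_apply_zero (hd : 2 ≤ dmax) (z : Fin dmax) (hz : z.val = 0)
    (d : Fin dmax) (i j : Fin K) :
    polMat Pv peps (fun _ => true) (d, i) (z, j) = (1 - peps) * Pv i j := by
  simp only [polMat, step, Matrix.of_apply, if_true]
  have h1 : z = (⟨0, (d, i).1.pos⟩ : Fin dmax) := Fin.ext hz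
  have h2 : ¬(z = ageSucc (d, i).1 ∧ j = (d, i).2) := by
    rintro ⟨h, -⟩
    have := congrArg Fin.val h
    simp [ageSucc, hz] at this
    omega
  rw [if_pos h1, if_neg h2]
  ring

lemma lemA (hd : 2 ≤ dmax) (hPv : ∀ i j, 0 ≤ Pv i j) (hp0 : 0 ≤ peps) (hp1 : peps ≤ 1)
    (m : ℕ) (hm : 1 ≤ m) :
    ∀ (i j : Fin K) (d : Fin dmax),
    (1 - peps) ^ m * (Pv ^ m) i j
      ≤ ((polMat Pv peps (fun _ => true)) ^ m) (d, i) (⟨0, by omega⟩, j) := by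
  induction m, hm using Nat.le_induction with
  | base =>
    intro i j d
    rw [pow_one, pow_one, pow_one, polMat_apply_zero Pv peps hd _ rfl]
  | succ m hm ih =>
    intro i j d
    set M := polMat Pv peps (fun _ => true)
    set z : Fin dmax := (⟨0, by omega⟩ : Fin dmax) with hzdef
    rw [pow_succ' M, Matrix.mul_apply, pow_succ' Pv, Matrix.mul_apply, Finset.mul_sum]
    rw [Fintype.sum_prod_type]
    have key : ∑ j', (1 - peps) ^ (m + 1) * (Pv i j' * (Pv ^ m) j' j)
        ≤ ∑ j', M (d, i) (z, j') * (M ^ m) (z, j') (z, j) := by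
      apply Finset.sum_le_sum
      intro j' _
      have hMz : M (d, i) (z, j') = (1 - peps) * Pv i j' :=
        polMat_apply_zero Pv peps hd z rfl d i j'
      rw [hMz]
      calc (1 - peps) ^ (m + 1) * (Pv i j' * (Pv ^ m) j' j)
          = ((1 - peps) * Pv i j') * ((1 - peps) ^ m * (Pv ^ m) j' j) := by ring
        _ ≤ ((1 - peps) * Pv i j') * ((M ^ m) (z, j') (z, j)) := by
            apply mul_le_mul_of_nonneg_left (ih j' j z)
            exact mul_nonneg (by linarith) (hPv i j')
    refine key.trans ?_
    exact Finset.single_le_sum (f := fun c => ∑ j', M (d, i) (c, j') * (M ^ m) (c, j') (z, j))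
      (fun c _ => Finset.sum_nonneg fun j' _ => mul_nonneg
        (polMat_nn Pv peps hPv hp0 hp1 _ _) (polMat_pow_nn Pv peps hPv hp0 hp1 m _ _))
      (Finset.mem_univ z)

lemma lemB (hd : 2 ≤ dmax) (hPv : ∀ i j, 0 ≤ Pv i j) (hp0 : 0 ≤ peps) (hp1 : peps ≤ 1)
    (k : ℕ) (hk : k ≤ dmax - 1) (j : Fin K) :
    peps ^ k ≤ ((polMat Pv peps (fun _ => true)) ^ k)
      ((⟨0, by omega⟩ : Fin dmax), j) ((⟨k, by omega⟩ : Fin dmax), j) := by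
  set M := polMat Pv peps (fun _ => true)
  induction k with
  | zero => simp [Matrix.one_apply]
  | succ k ih =>
    have hk' : k ≤ dmax - 1 := by omega
    have hklt : k < dmax := by omega
    have hk1lt : k + 1 < dmax := by omega
    have h0lt : 0 < dmax := by omega
    set z0 : Fin dmax := ⟨0, h0lt⟩ with hz0
    set zk : Fin dmax := ⟨k, hklt⟩ with hzk
    set zk1 : Fin dmax := ⟨k + 1, hk1lt⟩ with hzk1
    have step1 : peps ^ k ≤ (M ^ k) (z0, j) (zk, j) := ih hk'
    have hM : M (zk, j) (zk1, j) = peps := by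
      simp only [M, polMat, step, Matrix.of_apply, if_true]
      have hne : ¬(zk1 = (⟨0, (zk, j).1.pos⟩ : Fin dmax)) := by
        intro h
        have := congrArg Fin.val h
        simp [hzk1] at this
      have hcond : zk1 = ageSucc zk := by
        apply Fin.ext
        simp only [ageSucc, hzk1, hzk, Fin.val_mk]
        omega
      rw [if_neg hne]
      simp [hcond]
    calc peps ^ (k + 1) = peps ^ k * peps := by ring
      _ ≤ (M ^ k) (z0, j) (zk, j) * M (zk, j) (zk1, j) := by
          rw [hM]
          exact mul_le_mul_of_nonneg_right step1 hp0
      _ ≤ (M ^ (k + 1)) (z0, j) (zk1, j) := by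
          have h := chapman Pv peps hPv hp0 hp1 k 1 (z0, j) (zk, j) (zk1, j)
          rw [pow_one] at h
          exact h

end Aux

/-- for `0 ≤ p_eps ≤ 1`, every `m ≥ 1`, all usefulness indices `i, j` and all
ages `Δ, Δ'` (zero-indexed: `d` encodes age `d+1`), the `(m + Δ' − 1)`-step transition
probability of the always-pull chain satisfies
`((P_{π₁})^{m+Δ'−1})((Δ,i),(Δ',j)) ≥ (1−p_eps)^m · (P_v^m)_{ij} · p_eps^{Δ'−1}`. -/
theorem always_pull_chain_lower_bound
    {dmax K : ℕ} (hd : 2 ≤ dmax) (hK : 1 ≤ K)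
    (Pv : Matrix (Fin K) (Fin K) ℝ)
    (hPv_nn : ∀ i j, 0 ≤ Pv i j) (hPv_row : ∀ i, ∑ j, Pv i j = 1)
    (peps : ℝ) (hp0 : 0 ≤ peps) (hp1 : peps ≤ 1)
    (m : ℕ) (hm : 1 ≤ m) (i j : Fin K) (d d' : Fin dmax) :
    (1 - peps) ^ m * (Pv ^ m) i j * peps ^ d'.val ≤
      ((polMat Pv peps (fun _ => true)) ^ (m + d'.val)) (d, i) (d', j) := by
  set M := polMat Pv peps (fun _ => true)
  have hd' : d'.val ≤ dmax - 1 := by omega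
  have hA := lemA Pv peps hd hPv_nn hp0 hp1 m hm i j d
  have hB := lemB Pv peps hd hPv_nn hp0 hp1 d'.val hd' j
  have hEq : (⟨d'.val, by omega⟩ : Fin dmax) = d' := Fin.ext rfl
  rw [hEq] at hB
  have hC := chapman Pv peps hPv_nn hp0 hp1 m d'.val (d, i) (⟨0, by omega⟩, j) (d', j)
  calc (1 - peps) ^ m * (Pv ^ m) i j * peps ^ d'.val
      ≤ (M ^ m) (d, i) (⟨0, by omega⟩, j) * (M ^ d'.val) (⟨0, by omega⟩, j) (d', j) := by
        apply mul_le_mul hA hB (pow_nonneg hp0 _)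
        exact polMat_pow_nn Pv peps hPv_nn hp0 hp1 m _ _
    _ ≤ (M ^ (m + d'.val)) (d, i) (d', j) := hC
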